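/- Let s > 0, let G̃_s(x) = ∫₀^∞ exp(−πx²/y − y/(4π))·y^{−(1+(1−s)/2)} dy, and define H_s(x) = −2πx·∫₀^∞ exp(−πx²/y − y/(4π))·y^{−(2+(1−s)/2)} dy. Then for every x ≠ 0 the function G̃_s is differentiable at x with derivative G̃_s′(x) = H_s(x), and for every p ∈ [1,∞] with s > 2 − 1/p (where 1/∞ = 0), the function H_s belongs to L^p(ℝ). -/

import Mathlib

open MeasureTheory Real
open scoped ENNReal NNReal

/-- The (unnormalized) Bessel potential kernel of order `s` in one dimension, given by the
subordination formula `G̃ₛ(x) = ∫₀^∞ e^{-πx²/y - y/(4π)} y^{-(1+(1-s)/2)} dy`. -/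
noncomputable def besselKernel (s : ℝ) (x : ℝ) : ℝ :=
  ∫ y in Set.Ioi (0:ℝ),
    Real.exp (-(π * x ^ 2) / y - y / (4 * π)) * y ^ (-(1 + (1 - s) / 2))

/-- The formal derivative of `G̃ₛ`, obtained by differentiating under the integral sign:
`Hₛ(x) = -2πx ∫₀^∞ e^{-πx²/y - y/(4π)} y^{-(2+(1-s)/2)} dy`. -/
noncomputable def besselKernelDeriv (s : ℝ) (x : ℝ) : ℝ :=
  -2 * π * x * ∫ y in Set.Ioi (0:ℝ),
    Real.exp (-(π * x ^ 2) / y - y / (4 * π)) * y ^ (-(2 + (1 - s) / 2))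

section Aux

open Set

/-- `e^{-t} ≤ ⌈k⌉! t^{-k}` for `t > 0` and `k ≥ 0`. -/
lemma exp_neg_le_rpow {k t : ℝ} (hk : 0 ≤ k) (ht : 0 < t) :
    Real.exp (-t) ≤ (Nat.ceil k).factorial * t ^ (-k) := by
  have htk : (0:ℝ) < t ^ (-k) := Real.rpow_pos_of_pos ht _
  have hf1 : (1:ℝ) ≤ (Nat.ceil k).factorial := by
    exact_mod_cast Nat.one_le_iff_ne_zero.mpr (Nat.factorial_ne_zero _)
  rcases le_or_gt 1 t with h1 | h1
  · have hpow : t ^ (Nat.ceil k) / (Nat.ceil k).factorial ≤ Real.exp t :=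
      Real.pow_div_factorial_le_exp (x := t) ht.le _
    have h2 : t ^ (k:ℝ) ≤ (t:ℝ) ^ (Nat.ceil k) := by
      rw [← Real.rpow_natCast t (Nat.ceil k)]
      exact Real.rpow_le_rpow_of_exponent_le h1 (Nat.le_ceil k)
    have hek : Real.exp (-t) * t ^ (k:ℝ) ≤ (Nat.ceil k).factorial := by
      rw [Real.exp_neg]
      calc (Real.exp t)⁻¹ * t ^ (k:ℝ) ≤ (Real.exp t)⁻¹ * t ^ (Nat.ceil k) := by
            gcongr
        _ ≤ (Nat.ceil k).factorial := by
            rw [inv_mul_le_iff₀ (Real.exp_pos t)]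
            have hf : (0:ℝ) < (Nat.ceil k).factorial := by positivity
            rw [div_le_iff₀ hf] at hpow
            linarith
    have heq : Real.exp (-t) = Real.exp (-t) * t ^ (k:ℝ) * t ^ (-k) := by
      rw [mul_assoc, ← Real.rpow_add ht, add_neg_cancel, Real.rpow_zero, mul_one]
    rw [heq]
    gcongr
  · have he : Real.exp (-t) ≤ 1 := by
      rw [Real.exp_le_one_iff]; linarith
    have h2 : (1:ℝ) ≤ t ^ (-k) :=
      Real.one_le_rpow_of_pos_of_le_one_of_nonpos ht h1.le (neg_nonpos.mpr hk)
    calc Real.exp (-t) ≤ 1 := he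
      _ ≤ 1 * t ^ (-k) := by rw [one_mul]; exact h2
      _ ≤ (Nat.ceil k).factorial * t ^ (-k) := by gcongr

/-- Gamma-type integrability. -/
lemma gammaInt {β c : ℝ} (hβ : -1 < β) (hc : 0 < c) :
    IntegrableOn (fun y : ℝ => y ^ β * Real.exp (-(c * y))) (Ioi 0) := by
  have h := integrableOn_rpow_mul_exp_neg_mul_rpow hβ (by norm_num : (0:ℝ) < 1) hc
  refine h.congr_fun (fun y hy => ?_) measurableSet_Ioi
  simp only [Real.rpow_one, neg_mul]

lemma kernel_meas (c b : ℝ) :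
    Measurable fun y : ℝ => Real.exp (-c / y - y / (4 * π)) * y ^ b := by
  fun_prop

/-- Integrability of the kernel integrand. -/
lemma intOn_kernel {c : ℝ} (hc : 0 < c) (b : ℝ) :
    IntegrableOn (fun y : ℝ => Real.exp (-c / y - y / (4 * π)) * y ^ b) (Ioi 0) := by
  set M : ℝ := (Nat.ceil |b|).factorial * c ^ (-|b|) with hM
  have hM0 : 0 ≤ M := by positivity
  have hint : IntegrableOn
      (fun y : ℝ => M * (y ^ (|b| + b) * Real.exp (-((4 * π)⁻¹ * y)))) (Ioi 0) :=
    (gammaInt (by linarith [neg_abs_le b]) (by positivity)).const_mul M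
  refine Integrable.mono' hint ((kernel_meas c b).aestronglyMeasurable) ?_
  filter_upwards [ae_restrict_mem measurableSet_Ioi] with y hy
  have hy0 : (0:ℝ) < y := hy
  have h1 : Real.exp (-c / y - y / (4 * π)) * y ^ b
      = Real.exp (-(c / y)) * Real.exp (-(y / (4 * π))) * y ^ b := by
    rw [← Real.exp_add]; ring_nf
  rw [Real.norm_eq_abs, abs_of_nonneg (by positivity), h1]
  have h2 : Real.exp (-(c / y)) ≤ (Nat.ceil |b|).factorial * (c / y) ^ (-|b|) :=
    exp_neg_le_rpow (abs_nonneg b) (div_pos hc hy0)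
  have h3 : (c / y) ^ (-|b|) = c ^ (-|b|) * y ^ |b| := by
    rw [Real.div_rpow hc.le hy0.le, Real.rpow_neg hy0.le, div_eq_mul_inv, inv_inv]
  calc Real.exp (-(c / y)) * Real.exp (-(y / (4 * π))) * y ^ b
      ≤ ((Nat.ceil |b|).factorial * (c / y) ^ (-|b|)) * Real.exp (-(y / (4 * π))) * y ^ b := by
        gcongr
    _ = M * (y ^ (|b| + b) * Real.exp (-((4 * π)⁻¹ * y))) := by
        rw [h3, Real.rpow_add hy0, hM]
        rw [show -((4 * π)⁻¹ * y) = -(y / (4 * π)) by ring]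
        ring

/-- Differentiability of the kernel away from the origin. -/
lemma besselKernel_hasDerivAt (s : ℝ) {x : ℝ} (hx : x ≠ 0) :
    HasDerivAt (besselKernel s) (besselKernelDeriv s x) x := by
  have hax : 0 < |x| := abs_pos.mpr hx
  have hε : 0 < |x| / 2 := by positivity
  set F : ℝ → ℝ → ℝ := fun t y =>
    Real.exp (-(π * t ^ 2) / y - y / (4 * π)) * y ^ (-(1 + (1 - s) / 2)) with hF
  set F' : ℝ → ℝ → ℝ := fun t y =>
    -2 * π * t * (Real.exp (-(π * t ^ 2) / y - y / (4 * π)) * y ^ (-(2 + (1 - s) / 2))) with hF'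
  have key := hasDerivAt_integral_of_dominated_loc_of_deriv_le
    (μ := volume.restrict (Ioi 0)) (F := F) (F' := F') (x₀ := x)
    (bound := fun y => 2 * π * (3 * |x| / 2) *
      (Real.exp (-(π * (x / 2) ^ 2) / y - y / (4 * π)) * y ^ (-(2 + (1 - s) / 2))))
    (Metric.ball_mem_nhds x hε) ?_ ?_ ?_ ?_ ?_ ?_
  · have h2 : (∫ y in Ioi (0:ℝ), F' x y) = besselKernelDeriv s x := by
      rw [besselKernelDeriv, ← integral_const_mul]
    exact h2 ▸ key.2
  · filter_upwards with t
    exact ((kernel_meas (π * t ^ 2) _).aestronglyMeasurable)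
  · exact intOn_kernel (by positivity) _
  · exact ((kernel_meas (π * x ^ 2) _).aestronglyMeasurable.const_mul _)
  · filter_upwards [ae_restrict_mem measurableSet_Ioi] with y hy t ht
    have hy0 : (0:ℝ) < y := hy
    rw [Metric.mem_ball, Real.dist_eq] at ht
    have h1 : |t| ≤ 3 * |x| / 2 := by
      have := abs_sub_abs_le_abs_sub t x; linarith
    have h2 : |x| / 2 ≤ |t| := by
      have h := abs_sub_abs_le_abs_sub x t
      rw [abs_sub_comm] at h; linarith
    have he : (0:ℝ) < y ^ (-(2 + (1 - s) / 2)) := Real.rpow_pos_of_pos hy0 _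
    have habs : ‖F' t y‖ = 2 * π * |t| *
        (Real.exp (-(π * t ^ 2) / y - y / (4 * π)) * y ^ (-(2 + (1 - s) / 2))) := by
      simp only [hF', Real.norm_eq_abs, abs_mul]
      rw [abs_of_pos (Real.exp_pos _), abs_of_pos he, abs_of_pos Real.pi_pos]
      norm_num
    rw [habs]
    have hts : (x / 2) ^ 2 ≤ t ^ 2 := by
      have h3 : (|x| / 2) ^ 2 ≤ |t| ^ 2 := by
        apply pow_le_pow_left₀ (by positivity) h2
      calc (x / 2) ^ 2 = (|x| / 2) ^ 2 := by rw [div_pow, div_pow, sq_abs]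
        _ ≤ |t| ^ 2 := h3
        _ = t ^ 2 := sq_abs t
    have hexp : Real.exp (-(π * t ^ 2) / y - y / (4 * π)) ≤
        Real.exp (-(π * (x / 2) ^ 2) / y - y / (4 * π)) := by
      apply Real.exp_le_exp.mpr
      have hd : π * (x / 2) ^ 2 / y ≤ π * t ^ 2 / y := by
        gcongr
      have e1 : -(π * t ^ 2) / y = -(π * t ^ 2 / y) := by ring
      have e2 : -(π * (x / 2) ^ 2) / y = -(π * (x / 2) ^ 2 / y) := by ring
      rw [e1, e2]
      linarith
    gcongr
  · exact (intOn_kernel (c := π * (x / 2) ^ 2) (by positivity) _).const_mul _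
  · filter_upwards [ae_restrict_mem measurableSet_Ioi] with y hy t ht
    have hy0 : (0:ℝ) < y := hy
    have hd : HasDerivAt (fun t : ℝ => -(π * t ^ 2) / y - y / (4 * π))
        (-(π * (2 * t)) / y) t := by
      have : HasDerivAt (fun t : ℝ => t ^ 2) (2 * t) t := by
        simpa using hasDerivAt_pow 2 t
      exact (((this.const_mul π).neg.div_const y).sub_const _)
    have := ((hd.exp).mul_const (y ^ (-(1 + (1 - s) / 2))))
    refine this.congr_deriv ?_
    simp only [hF']
    rw [show (-(2 + (1 - s) / 2)) = (-(1 + (1 - s) / 2)) + (-1) by ring,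
      Real.rpow_add hy0, Real.rpow_neg_one]
    rw [div_eq_mul_inv (-(π * (2 * t))) y]
    ring

/-- AM-GM splitting of the exponential factor. -/
lemma expSplit {x y : ℝ} (hy : 0 < y) :
    Real.exp (-(π * x ^ 2) / y - y / (4 * π)) ≤
      Real.exp (-|x| / 2) * (Real.exp (-(π * x ^ 2 / (2 * y))) * Real.exp (-((8 * π)⁻¹ * y))) := by
  rw [← Real.exp_add, ← Real.exp_add, Real.exp_le_exp]
  have hπ : 0 < π := Real.pi_pos
  have key : 4 * π * y * |x| ≤ 4 * π ^ 2 * x ^ 2 + y ^ 2 := by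
    nlinarith [sq_nonneg (2 * π * |x| - y), sq_abs x]
  have h2 : |x| / 2 ≤ π * x ^ 2 / (2 * y) + (8 * π)⁻¹ * y := by
    rw [← sub_nonneg]
    have he : π * x ^ 2 / (2 * y) + (8 * π)⁻¹ * y - |x| / 2
        = (4 * π ^ 2 * x ^ 2 + y ^ 2 - 4 * π * y * |x|) / (8 * π * y) := by
      field_simp
      ring
    rw [he]
    apply div_nonneg (by linarith) (by positivity)
  have e1 : -(π * x ^ 2) / y - y / (4 * π)
      = (-(π * x ^ 2 / (2 * y)) + -((8 * π)⁻¹ * y)) + (-(π * x ^ 2 / (2 * y)) + -((8 * π)⁻¹ * y)) := by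
    field_simp
    ring
  linarith [h2, e1]

/-- The key pointwise bound on `besselKernelDeriv`. -/
lemma besselKernelDeriv_bound (s r : ℝ) (hr1 : r ≤ 1) (hr2 : r < s - 2) :
    ∃ C : ℝ, 0 ≤ C ∧ ∀ x : ℝ,
      |besselKernelDeriv s x| ≤ C * (|x| ^ r * Real.exp (-|x| / 2)) := by
  have hπ : 0 < π := Real.pi_pos
  set k : ℝ := (1 - r) / 2 with hk
  have hk0 : 0 ≤ k := by rw [hk]; linarith
  set a : ℝ := 2 + (1 - s) / 2 with ha
  have hka : -1 < k - a := by rw [hk, ha]; linarith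
  set M : ℝ := ((Nat.ceil k).factorial : ℝ) with hMdef
  have hM0 : (0:ℝ) < M := by rw [hMdef]; exact_mod_cast Nat.factorial_pos _
  set D : ℝ := ∫ y in Ioi (0:ℝ), y ^ (k - a) * Real.exp (-((8 * π)⁻¹ * y)) with hD
  have hD0 : 0 ≤ D := setIntegral_nonneg measurableSet_Ioi fun y hy =>
    mul_nonneg (Real.rpow_nonneg (le_of_lt hy) _) (Real.exp_pos _).le
  have hC0 : 0 ≤ 2 * π * (M * (π / 2) ^ (-k)) * D :=
    mul_nonneg (mul_nonneg (by positivity)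
      (mul_nonneg hM0.le (Real.rpow_nonneg (by positivity) _))) hD0
  refine ⟨2 * π * (M * (π / 2) ^ (-k)) * D, hC0, fun x => ?_⟩
  rcases eq_or_ne x 0 with rfl | hx
  · have h0 : besselKernelDeriv s 0 = 0 := by simp [besselKernelDeriv]
    rw [h0, abs_zero]
    exact mul_nonneg hC0 (by positivity)
  have hax : 0 < |x| := abs_pos.mpr hx
  have hx2 : 0 < π * x ^ 2 := by positivity
  set I : ℝ := ∫ y in Ioi (0:ℝ),
    Real.exp (-(π * x ^ 2) / y - y / (4 * π)) * y ^ (-a) with hI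
  have hInn : 0 ≤ I := setIntegral_nonneg measurableSet_Ioi fun y hy =>
    mul_nonneg (Real.exp_pos _).le (Real.rpow_nonneg (le_of_lt hy) _)
  have hIle : I ≤ (Real.exp (-|x| / 2) * (M * (π * x ^ 2 / 2) ^ (-k))) * D := by
    rw [hI, hD, ← integral_const_mul]
    apply setIntegral_mono_on
    · exact intOn_kernel hx2 _
    · exact (Integrable.const_mul (gammaInt hka (by positivity)) _)
    · exact measurableSet_Ioi
    intro y hy
    have hy0 : (0:ℝ) < y := hy
    have step1 := expSplit (x := x) hy0
    have step2 : Real.exp (-(π * x ^ 2 / (2 * y))) ≤ M * (π * x ^ 2 / (2 * y)) ^ (-k) :=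
      exp_neg_le_rpow hk0 (by positivity)
    have step3 : (π * x ^ 2 / (2 * y)) ^ (-k) = (π * x ^ 2 / 2) ^ (-k) * y ^ k := by
      rw [show π * x ^ 2 / (2 * y) = (π * x ^ 2 / 2) / y by ring,
        Real.div_rpow (by positivity) hy0.le, Real.rpow_neg hy0.le, div_eq_mul_inv, inv_inv]
    calc Real.exp (-(π * x ^ 2) / y - y / (4 * π)) * y ^ (-a)
        ≤ (Real.exp (-|x| / 2) * (Real.exp (-(π * x ^ 2 / (2 * y))) *
            Real.exp (-((8 * π)⁻¹ * y)))) * y ^ (-a) := by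
          gcongr
      _ ≤ (Real.exp (-|x| / 2) * ((M * ((π * x ^ 2 / 2) ^ (-k) * y ^ k)) *
            Real.exp (-((8 * π)⁻¹ * y)))) * y ^ (-a) := by
          rw [← step3]
          gcongr
      _ = Real.exp (-|x| / 2) * (M * (π * x ^ 2 / 2) ^ (-k)) *
            (y ^ (k - a) * Real.exp (-((8 * π)⁻¹ * y))) := by
          rw [show k - a = k + -a by ring, Real.rpow_add hy0]
          ring
  have habs : |besselKernelDeriv s x| = 2 * π * |x| * I := by
    rw [besselKernelDeriv, ← hI, abs_mul, abs_of_nonneg hInn, abs_mul, abs_mul]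
    rw [abs_of_pos hπ]
    norm_num
  rw [habs]
  have hxr : (π * x ^ 2 / 2) ^ (-k) = (π / 2) ^ (-k) * |x| ^ (-(2 * k)) := by
    rw [show π * x ^ 2 / 2 = (π / 2) * x ^ 2 by ring,
      Real.mul_rpow (by positivity) (by positivity), ← sq_abs,
      ← Real.rpow_natCast |x| 2, ← Real.rpow_mul (abs_nonneg x)]
    norm_num
  calc 2 * π * |x| * I
      ≤ 2 * π * |x| * ((Real.exp (-|x| / 2) * (M * (π * x ^ 2 / 2) ^ (-k))) * D) := by
        gcongr
    _ = 2 * π * (M * (π / 2) ^ (-k)) * D * (|x| * |x| ^ (-(2 * k)) * Real.exp (-|x| / 2)) := by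
        rw [hxr]; ring
    _ = 2 * π * (M * (π / 2) ^ (-k)) * D * (|x| ^ r * Real.exp (-|x| / 2)) := by
        rw [show |x| * |x| ^ (-(2 * k)) = |x| ^ (1:ℝ) * |x| ^ (-(2 * k)) by rw [Real.rpow_one],
          ← Real.rpow_add hax, show (1:ℝ) + -(2 * k) = r by rw [hk]; ring]

lemma besselKernelDeriv_meas (s : ℝ) :
    AEStronglyMeasurable (besselKernelDeriv s) (volume : Measure ℝ) := by
  have h : StronglyMeasurable fun x : ℝ => ∫ y in Ioi (0:ℝ),
      Real.exp (-(π * x ^ 2) / y - y / (4 * π)) * y ^ (-(2 + (1 - s) / 2)) := by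
    apply MeasureTheory.StronglyMeasurable.integral_prod_right'
      (f := fun p : ℝ × ℝ =>
        Real.exp (-(π * p.1 ^ 2) / p.2 - p.2 / (4 * π)) * p.2 ^ (-(2 + (1 - s) / 2)))
    apply Measurable.stronglyMeasurable
    fun_prop
  exact ((measurable_id.const_mul (-2 * π)).mul h.measurable).aestronglyMeasurable

lemma majorant_integrable {β c : ℝ} (hβ : -1 < β) (hc : 0 < c) :
    Integrable (fun x : ℝ => |x| ^ β * Real.exp (-(c * |x|))) (volume : Measure ℝ) := by
  have hIoi : IntegrableOn (fun x : ℝ => |x| ^ β * Real.exp (-(c * |x|))) (Ioi 0) :=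
    (gammaInt hβ hc).congr_fun (fun x hx => by rw [abs_of_pos hx]) measurableSet_Ioi
  have hIic : IntegrableOn (fun x : ℝ => |x| ^ β * Real.exp (-(c * |x|))) (Iic 0) := by
    rw [← Measure.map_neg_eq_self (volume : Measure ℝ)]
    have m : MeasurableEmbedding fun x : ℝ => -x := (Homeomorph.neg ℝ).measurableEmbedding
    rw [m.integrableOn_map_iff]
    simp_rw [Function.comp_def, abs_neg, neg_preimage, neg_Iic, neg_zero]
    exact Iff.mpr integrableOn_Ici_iff_integrableOn_Ioi hIoi
  rw [← integrableOn_univ, ← Iic_union_Ioi (a := (0:ℝ))]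
  exact hIic.union hIoi

lemma majorant_meas (r : ℝ) :
    AEStronglyMeasurable (fun x : ℝ => |x| ^ r * Real.exp (-|x| / 2)) (volume : Measure ℝ) := by
  apply Measurable.aestronglyMeasurable
  fun_prop

lemma memLp_majorant_top {r : ℝ} (hr : 0 < r) :
    MemLp (fun x : ℝ => |x| ^ r * Real.exp (-|x| / 2)) ∞ (volume : Measure ℝ) := by
  apply memLp_top_of_bound (majorant_meas r) ((2:ℝ) ^ r * (Nat.ceil r).factorial)
  filter_upwards with x
  rcases eq_or_ne x 0 with rfl | hx
  · rw [Real.norm_eq_abs]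
    simp [Real.zero_rpow hr.ne']
    positivity
  · have hax : 0 < |x| := abs_pos.mpr hx
    have h1 : Real.exp (-(|x| / 2)) ≤ (Nat.ceil r).factorial * (|x| / 2) ^ (-r) :=
      exp_neg_le_rpow hr.le (by positivity)
    have h2 : (|x| / 2) ^ (-r) = |x| ^ (-r) * 2 ^ r := by
      rw [Real.div_rpow (abs_nonneg x) (by norm_num), Real.rpow_neg (by norm_num : (0:ℝ) ≤ 2),
        div_eq_mul_inv, inv_inv]
    rw [Real.norm_eq_abs, abs_of_nonneg (by positivity)]
    calc |x| ^ r * Real.exp (-|x| / 2)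
        ≤ |x| ^ r * ((Nat.ceil r).factorial * (|x| ^ (-r) * 2 ^ r)) := by
          rw [show -|x| / 2 = -(|x| / 2) by ring, ← h2]
          gcongr
      _ = 2 ^ r * (Nat.ceil r).factorial * (|x| ^ r * |x| ^ (-r)) := by ring
      _ = 2 ^ r * (Nat.ceil r).factorial := by
          rw [← Real.rpow_add hax, add_neg_cancel, Real.rpow_zero, mul_one]

lemma memLp_majorant {r : ℝ} (p : ℝ≥0∞) (hp1 : 1 ≤ p) (hr : -1 / p.toReal < r) :
    MemLp (fun x : ℝ => |x| ^ r * Real.exp (-|x| / 2)) p (volume : Measure ℝ) := by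
  have hp0 : p ≠ 0 := by
    intro h; rw [h] at hp1; exact absurd hp1 (by simp)
  rcases eq_or_ne p ∞ with rfl | hptop
  · have h0 : (-1:ℝ) / (∞ : ℝ≥0∞).toReal = 0 := by simp
    rw [h0] at hr
    exact memLp_majorant_top hr
  have hq : 0 < p.toReal := ENNReal.toReal_pos hp0 hptop
  rw [← memLp_norm_rpow_iff (majorant_meas r) hp0 hptop, ENNReal.div_self hp0 hptop,
    memLp_one_iff_integrable]
  have hβ : (-1:ℝ) < r * p.toReal := by
    rw [div_lt_iff₀ hq] at hr
    linarith
  apply (majorant_integrable hβ (by positivity : (0:ℝ) < p.toReal / 2)).congr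
  filter_upwards with x
  have hx2 : (0:ℝ) ≤ |x| ^ r * Real.exp (-|x| / 2) := by positivity
  rw [Real.norm_eq_abs, abs_of_nonneg hx2,
    Real.mul_rpow (by positivity) (Real.exp_pos _).le,
    ← Real.rpow_mul (abs_nonneg x),
    Real.rpow_def_of_pos (Real.exp_pos _), Real.log_exp]
  ring_nf

end Aux

/-- For `s > 0`, `G̃ₛ` is differentiable away from the origin with derivative `Hₛ`, and for
every `p ∈ [1,∞]` with `s > 2 - 1/p` (where `1/∞ = 0`), `Hₛ` belongs to `L^p(ℝ)`. -/
theorem besselKernelDeriv_hasDerivAt_and_memLp (s : ℝ) (hs : 0 < s) :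
    (∀ x : ℝ, x ≠ 0 → HasDerivAt (besselKernel s) (besselKernelDeriv s x) x) ∧
    (∀ p : ℝ≥0∞, 1 ≤ p → 2 - 1 / p.toReal < s →
      MemLp (besselKernelDeriv s) p (volume : Measure ℝ)) := by
  refine ⟨fun x hx => besselKernel_hasDerivAt s hx, fun p hp1 hps => ?_⟩
  set L : ℝ := -1 / p.toReal with hL
  have hLe : L = -(1 / p.toReal) := by rw [hL]; ring
  have hL0 : L ≤ 0 := by
    rw [hLe]
    exact neg_nonpos.mpr (by positivity)
  have hLs : L < s - 2 := by rw [hLe]; linarith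
  set m : ℝ := min (s - 2) 1 with hm
  have hLm : L < m := lt_min hLs (lt_of_le_of_lt hL0 one_pos)
  set r : ℝ := (L + m) / 2 with hr
  have hrm : r < m := by rw [hr]; linarith
  have hr1 : r ≤ 1 := hrm.le.trans (min_le_right _ _)
  have hr2 : r < s - 2 := hrm.trans_le (min_le_left _ _)
  have hrL : L < r := by rw [hr]; linarith
  obtain ⟨C, hC0, hC⟩ := besselKernelDeriv_bound s r hr1 hr2
  have hmaj : MemLp (fun x : ℝ => C * (|x| ^ r * Real.exp (-|x| / 2))) p (volume : Measure ℝ) :=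
    (memLp_majorant p hp1 (hL ▸ hrL)).const_mul C
  apply MemLp.of_le hmaj (besselKernelDeriv_meas s)
  filter_upwards with x
  rw [Real.norm_eq_abs]
  exact (hC x).trans (le_abs_self _)
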